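/- Let b be a measurable function of a random variable V and let e(V) := P(T=1 | V) be the propensity score, where T is binary. Then T ⊥ V | b(V) if and only if e(V) is b(V)-measurable (i.e., e(V) = f(b(V)) for some measurable f). -/

import Mathlib

open ProbabilityTheory MeasureTheory

lemma doob_dynkin_real {Ω γ : Type*} [MeasurableSpace γ] {φ : Ω → γ} {g : Ω → ℝ}
    (hg : Measurable[MeasurableSpace.comap φ inferInstance] g) :
    ∃ f : γ → ℝ, Measurable f ∧ ∀ ω, g ω = f (φ ω) := by
  classical
  obtain ⟨e, he, hei⟩ :=
    MeasurableSpace.measurable_injection_nat_bool_of_countablySeparated ℝ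
  obtain ⟨r, hr, hre⟩ := (he.measurableEmbedding hei).exists_measurable_extend
    (measurable_id (α := ℝ)) (fun _ => ⟨0⟩)
  have hcoord : ∀ n : ℕ, ∃ t : Set γ, MeasurableSet t ∧
      φ ⁻¹' t = ((fun ω => e (g ω) n) ⁻¹' {true}) := by
    intro n
    have : MeasurableSet[MeasurableSpace.comap φ inferInstance]
        ((fun ω => e (g ω) n) ⁻¹' {true}) :=
      ((measurable_pi_apply n).comp (he.comp hg)) (measurableSet_singleton true)
    exact this
  choose A hA hA2 using hcoord
  set H : γ → ℕ → Bool := fun y n => decide (y ∈ A n) with hHdef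
  have hHm : Measurable H := by
    refine measurable_pi_lambda _ fun n => measurable_to_bool ?_
    have : (fun y => decide (y ∈ A n)) ⁻¹' {true} = A n := by ext y; simp
    rw [hHdef]
    simpa [this] using hA n
  refine ⟨r ∘ H, hr.comp hHm, fun ω => ?_⟩
  have hHe : H (φ ω) = e (g ω) := by
    funext n
    have hiff : φ ω ∈ A n ↔ e (g ω) n = true := by
      have := Set.ext_iff.mp (hA2 n) ω
      simpa using this
    simp only [hHdef, hiff]
    simp
  show g ω = r (H (φ ω))
  rw [hHe]
  exact (congrFun hre (g ω)).symm

theorem balancing_score_iff_propensity_measurable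
    {Ω : Type*} {mΩ : MeasurableSpace Ω} [StandardBorelSpace Ω]
    {μ : Measure Ω} [IsProbabilityMeasure μ]
    {𝒱 γ : Type*} [MeasurableSpace 𝒱] [MeasurableSpace γ]
    (T : Ω → Fin 2) (V : Ω → 𝒱) (b : 𝒱 → γ)
    (hT : Measurable T) (hV : Measurable V) (hb : Measurable b) :
    CondIndepFun (MeasurableSpace.comap (fun ω => b (V ω)) inferInstance)
        ((hb.comp hV).comap_le) T V μ ↔
      ∃ f : γ → ℝ, Measurable f ∧
        (μ⟦T ⁻¹' {1} | MeasurableSpace.comap V inferInstance⟧)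
          =ᵐ[μ] fun ω => f (b (V ω)) := by
  classical
  set φ : Ω → γ := fun ω => b (V ω) with hφdef
  have hm𝒢 : MeasurableSpace.comap φ inferInstance ≤ mΩ := (hb.comp hV).comap_le
  have hmV : MeasurableSpace.comap V inferInstance ≤ mΩ := hV.comap_le
  have h𝒢V : MeasurableSpace.comap φ inferInstance
      ≤ MeasurableSpace.comap V inferInstance := by
    intro s hs
    obtain ⟨t, ht, rfl⟩ := hs
    exact ⟨b ⁻¹' t, hb ht, rfl⟩
  set A : Set Ω := T ⁻¹' {1} with hAdef
  have hA : MeasurableSet A := hT (measurableSet_singleton 1)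
  have intA : Integrable (A.indicator fun _ => (1 : ℝ)) μ :=
    (integrable_const 1).indicator hA
  constructor
  · intro h
    have h' := (condIndepFun_iff_condExp_inter_preimage_eq_mul hT hV).mp h
    have hg₀m : StronglyMeasurable[MeasurableSpace.comap φ inferInstance]
        (μ⟦A | MeasurableSpace.comap φ inferInstance⟧) := stronglyMeasurable_condExp
    have hver : (μ⟦A | MeasurableSpace.comap φ inferInstance⟧)
        =ᵐ[μ] μ⟦A | MeasurableSpace.comap V inferInstance⟧ := by
      refine ae_eq_condExp_of_forall_setIntegral_eq hmV intA
        (fun s _ _ => integrable_condExp.integrableOn) (fun s hs _ => ?_)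
        (StronglyMeasurable.aestronglyMeasurable (hg₀m.mono h𝒢V))
      obtain ⟨t, ht, rfl⟩ := hs
      have hBΩ : MeasurableSet (V ⁻¹' t) := hV ht
      have hint2 : Integrable ((V ⁻¹' t).indicator fun _ => (1 : ℝ)) μ :=
        (integrable_const 1).indicator hBΩ
      have hint1 : Integrable ((μ⟦A | MeasurableSpace.comap φ inferInstance⟧)
          * (V ⁻¹' t).indicator fun _ => (1 : ℝ)) μ := by
        have h0 : Integrable ((V ⁻¹' t).indicator
            (μ⟦A | MeasurableSpace.comap φ inferInstance⟧)) μ :=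
          integrable_condExp.indicator hBΩ
        refine h0.congr (Filter.Eventually.of_forall fun x => ?_)
        by_cases hx : x ∈ V ⁻¹' t <;> simp [hx]
      calc ∫ x in V ⁻¹' t, (μ⟦A | MeasurableSpace.comap φ inferInstance⟧) x ∂μ
          = ∫ x, ((V ⁻¹' t).indicator (μ⟦A | MeasurableSpace.comap φ inferInstance⟧)) x ∂μ :=
            (integral_indicator hBΩ).symm
        _ = ∫ x, ((μ⟦A | MeasurableSpace.comap φ inferInstance⟧)
              * (V ⁻¹' t).indicator fun _ => (1 : ℝ)) x ∂μ := by
            refine integral_congr_ae (Filter.Eventually.of_forall fun x => ?_)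
            by_cases hx : x ∈ V ⁻¹' t <;> simp [hx]
        _ = ∫ x, (μ[(μ⟦A | MeasurableSpace.comap φ inferInstance⟧)
              * (V ⁻¹' t).indicator fun _ => (1 : ℝ) | MeasurableSpace.comap φ inferInstance]) x ∂μ :=
            (integral_condExp hm𝒢).symm
        _ = ∫ x, ((μ⟦A | MeasurableSpace.comap φ inferInstance⟧) x
              * (μ⟦V ⁻¹' t | MeasurableSpace.comap φ inferInstance⟧) x) ∂μ := by
            refine integral_congr_ae ?_
            have := condExp_mul_of_stronglyMeasurable_left hg₀m hint1 hint2
            filter_upwards [this] with x hx using hx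
        _ = ∫ x, (μ⟦A ∩ V ⁻¹' t | MeasurableSpace.comap φ inferInstance⟧) x ∂μ := by
            refine (integral_congr_ae ?_).symm
            exact h' {1} t (measurableSet_singleton 1) ht
        _ = ∫ x, ((A ∩ V ⁻¹' t).indicator fun _ => (1 : ℝ)) x ∂μ := integral_condExp hm𝒢
        _ = ∫ x in V ⁻¹' t, (A.indicator fun _ => (1 : ℝ)) x ∂μ := by
            rw [← integral_indicator hBΩ]
            refine integral_congr_ae (Filter.Eventually.of_forall fun x => ?_)
            by_cases h1 : x ∈ A <;> by_cases h2 : x ∈ V ⁻¹' t <;>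
              simp [Set.indicator_apply, h1, h2]
    obtain ⟨f, hf, hfe⟩ := doob_dynkin_real hg₀m.measurable
    refine ⟨f, hf, ?_⟩
    filter_upwards [hver] with ω hω
    rw [← hω, hfe ω]
  · rintro ⟨f, hf, hfe⟩
    have hfφ : StronglyMeasurable[MeasurableSpace.comap φ inferInstance] (fun ω => f (φ ω)) :=
      (hf.comp (comap_measurable φ)).stronglyMeasurable
    have hfφ_int : Integrable (fun ω => f (φ ω)) μ := integrable_condExp.congr hfe
    have hGV : (μ⟦A | MeasurableSpace.comap φ inferInstance⟧) =ᵐ[μ] fun ω => f (φ ω) := by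
      calc (μ⟦A | MeasurableSpace.comap φ inferInstance⟧)
          =ᵐ[μ] μ[μ⟦A | MeasurableSpace.comap V inferInstance⟧
            | MeasurableSpace.comap φ inferInstance] := (condExp_condExp_of_le h𝒢V hmV).symm
        _ =ᵐ[μ] μ[(fun ω => f (φ ω)) | MeasurableSpace.comap φ inferInstance] :=
            condExp_congr_ae hfe
        _ =ᵐ[μ] fun ω => f (φ ω) :=
            Filter.EventuallyEq.of_eq (condExp_of_stronglyMeasurable hm𝒢 hfφ hfφ_int)
    have key : ∀ t : Set 𝒱, MeasurableSet t →
        (μ⟦A ∩ V ⁻¹' t | MeasurableSpace.comap φ inferInstance⟧) =ᵐ[μ]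
          fun ω => (μ⟦A | MeasurableSpace.comap φ inferInstance⟧) ω
            * (μ⟦V ⁻¹' t | MeasurableSpace.comap φ inferInstance⟧) ω := by
      intro t ht
      have hBΩ : MeasurableSet (V ⁻¹' t) := hV ht
      have hBV : MeasurableSet[MeasurableSpace.comap V inferInstance] (V ⁻¹' t) := ⟨t, ht, rfl⟩
      have hint2 : Integrable ((V ⁻¹' t).indicator fun _ => (1 : ℝ)) μ :=
        (integrable_const 1).indicator hBΩ
      have hindB : StronglyMeasurable[MeasurableSpace.comap V inferInstance]
          ((V ⁻¹' t).indicator fun _ => (1 : ℝ)) :=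
        stronglyMeasurable_const.indicator hBV
      have hintAB : Integrable (((V ⁻¹' t).indicator fun _ => (1 : ℝ))
          * A.indicator fun _ => (1 : ℝ)) μ := by
        have h0 : Integrable ((A ∩ V ⁻¹' t).indicator fun _ => (1 : ℝ)) μ :=
          (integrable_const 1).indicator (hA.inter hBΩ)
        refine h0.congr (Filter.Eventually.of_forall fun x => ?_)
        by_cases h1 : x ∈ A <;> by_cases h2 : x ∈ V ⁻¹' t <;>
          simp [Set.indicator_apply, h1, h2]
      have hpullV : (μ⟦A ∩ V ⁻¹' t | MeasurableSpace.comap V inferInstance⟧) =ᵐ[μ]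
          ((V ⁻¹' t).indicator fun _ => (1 : ℝ))
            * μ⟦A | MeasurableSpace.comap V inferInstance⟧ := by
        have h1 : (A ∩ V ⁻¹' t).indicator (fun _ => (1 : ℝ)) =
            ((V ⁻¹' t).indicator fun _ => (1 : ℝ)) * A.indicator fun _ => (1 : ℝ) := by
          funext x
          by_cases h1 : x ∈ A <;> by_cases h2 : x ∈ V ⁻¹' t <;>
            simp [Set.indicator_apply, h1, h2]
        calc (μ⟦A ∩ V ⁻¹' t | MeasurableSpace.comap V inferInstance⟧)
            = μ[((V ⁻¹' t).indicator fun _ => (1 : ℝ)) * A.indicator fun _ => (1 : ℝ)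
                | MeasurableSpace.comap V inferInstance] := by rw [← h1]
          _ =ᵐ[μ] ((V ⁻¹' t).indicator fun _ => (1 : ℝ))
                * μ⟦A | MeasurableSpace.comap V inferInstance⟧ :=
              condExp_mul_of_stronglyMeasurable_left hindB hintAB intA
      have step2 : ((V ⁻¹' t).indicator fun _ => (1 : ℝ))
          * (μ⟦A | MeasurableSpace.comap V inferInstance⟧) =ᵐ[μ]
          (fun ω => f (φ ω)) * ((V ⁻¹' t).indicator fun _ => (1 : ℝ)) := by
        filter_upwards [hfe] with ω hω
        simp only [Pi.mul_apply]
        rw [hω, mul_comm]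
      have hint3 : Integrable ((fun ω => f (φ ω))
          * ((V ⁻¹' t).indicator fun _ => (1 : ℝ))) μ := by
        have h0 : Integrable ((V ⁻¹' t).indicator fun ω => f (φ ω)) μ :=
          hfφ_int.indicator hBΩ
        refine h0.congr (Filter.Eventually.of_forall fun x => ?_)
        by_cases hx : x ∈ V ⁻¹' t <;> simp [Set.indicator_apply, hx]
      calc (μ⟦A ∩ V ⁻¹' t | MeasurableSpace.comap φ inferInstance⟧)
          =ᵐ[μ] μ[μ⟦A ∩ V ⁻¹' t | MeasurableSpace.comap V inferInstance⟧
            | MeasurableSpace.comap φ inferInstance] := (condExp_condExp_of_le h𝒢V hmV).symm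
        _ =ᵐ[μ] μ[(fun ω => f (φ ω)) * ((V ⁻¹' t).indicator fun _ => (1 : ℝ))
            | MeasurableSpace.comap φ inferInstance] :=
              condExp_congr_ae (hpullV.trans step2)
        _ =ᵐ[μ] (fun ω => f (φ ω)) * μ⟦V ⁻¹' t | MeasurableSpace.comap φ inferInstance⟧ :=
              condExp_mul_of_stronglyMeasurable_left hfφ hint3 hint2
        _ =ᵐ[μ] fun ω => (μ⟦A | MeasurableSpace.comap φ inferInstance⟧) ω
              * (μ⟦V ⁻¹' t | MeasurableSpace.comap φ inferInstance⟧) ω := by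
            filter_upwards [hGV] with ω hω
            simp only [Pi.mul_apply]
            rw [hω]
    rw [condIndepFun_iff_condExp_inter_preimage_eq_mul hT hV]
    intro s t hs ht
    have h01 : ∀ x : Fin 2, x = 0 ∨ x = 1 := by decide
    have hBΩ : MeasurableSet (V ⁻¹' t) := hV ht
    by_cases h1s : (1 : Fin 2) ∈ s <;> by_cases h0s : (0 : Fin 2) ∈ s
    · -- `T ⁻¹' s = univ`
      have hTs : T ⁻¹' s = Set.univ := by
        ext ω
        simp only [Set.mem_preimage, Set.mem_univ, iff_true]
        rcases h01 (T ω) with h | h <;> rw [h] <;> assumption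
      have huniv : (μ⟦(Set.univ : Set Ω) | MeasurableSpace.comap φ inferInstance⟧)
          = fun _ => (1 : ℝ) := by
        rw [Set.indicator_univ]
        exact condExp_const hm𝒢 1
      rw [hTs, Set.univ_inter, huniv]
      filter_upwards with ω
      simp
    · -- `T ⁻¹' s = A`
      have hTs : T ⁻¹' s = A := by
        ext ω
        simp only [hAdef, Set.mem_preimage, Set.mem_singleton_iff]
        constructor
        · intro hm
          rcases h01 (T ω) with h | h
          · exact absurd (h ▸ hm) h0s
          · exact h
        · intro h
          rw [h]
          exact h1s
      rw [hTs]
      exact key t ht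
    · -- `T ⁻¹' s = Aᶜ`
      have hTs : T ⁻¹' s = Aᶜ := by
        ext ω
        simp only [hAdef, Set.mem_preimage, Set.mem_compl_iff, Set.mem_singleton_iff]
        constructor
        · intro hm heq
          exact h1s (heq ▸ hm)
        · intro hne
          rcases h01 (T ω) with h | h
          · rw [h]; exact h0s
          · exact absurd h hne
      rw [hTs]
      have intB : Integrable ((V ⁻¹' t).indicator fun _ => (1 : ℝ)) μ :=
        (integrable_const 1).indicator hBΩ
      have intAB : Integrable ((A ∩ V ⁻¹' t).indicator fun _ => (1 : ℝ)) μ :=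
        (integrable_const 1).indicator (hA.inter hBΩ)
      have hsub1 : (μ⟦Aᶜ ∩ V ⁻¹' t | MeasurableSpace.comap φ inferInstance⟧) =ᵐ[μ]
          fun ω => (μ⟦V ⁻¹' t | MeasurableSpace.comap φ inferInstance⟧) ω
            - (μ⟦A ∩ V ⁻¹' t | MeasurableSpace.comap φ inferInstance⟧) ω := by
        have hind : (Aᶜ ∩ V ⁻¹' t).indicator (fun _ => (1 : ℝ)) =
            ((V ⁻¹' t).indicator fun _ => (1 : ℝ))
              - (A ∩ V ⁻¹' t).indicator fun _ => (1 : ℝ) := by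
          funext x
          by_cases h1 : x ∈ A <;> by_cases h2 : x ∈ V ⁻¹' t <;>
            simp [Set.indicator_apply, h1, h2]
        calc (μ⟦Aᶜ ∩ V ⁻¹' t | MeasurableSpace.comap φ inferInstance⟧)
            = μ[((V ⁻¹' t).indicator fun _ => (1 : ℝ))
                - (A ∩ V ⁻¹' t).indicator fun _ => (1 : ℝ)
                | MeasurableSpace.comap φ inferInstance] := by rw [← hind]
          _ =ᵐ[μ] fun ω => (μ⟦V ⁻¹' t | MeasurableSpace.comap φ inferInstance⟧) ω
                - (μ⟦A ∩ V ⁻¹' t | MeasurableSpace.comap φ inferInstance⟧) ω := by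
              filter_upwards [condExp_sub intB intAB _] with ω hω
              simpa using hω
      have hcompl : (μ⟦Aᶜ | MeasurableSpace.comap φ inferInstance⟧) =ᵐ[μ]
          fun ω => 1 - (μ⟦A | MeasurableSpace.comap φ inferInstance⟧) ω := by
        have hind : Aᶜ.indicator (fun _ => (1 : ℝ)) =
            (fun _ => (1 : ℝ)) - A.indicator fun _ => (1 : ℝ) := by
          funext x
          by_cases h1 : x ∈ A <;> simp [Set.indicator_apply, h1]
        calc (μ⟦Aᶜ | MeasurableSpace.comap φ inferInstance⟧)
            = μ[(fun _ => (1 : ℝ)) - A.indicator fun _ => (1 : ℝ)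
                | MeasurableSpace.comap φ inferInstance] := by rw [← hind]
          _ =ᵐ[μ] fun ω => 1 - (μ⟦A | MeasurableSpace.comap φ inferInstance⟧) ω := by
              filter_upwards [condExp_sub (integrable_const (1 : ℝ)) intA _] with ω hω
              rw [Pi.sub_apply] at hω
              rw [hω, condExp_const hm𝒢]
      filter_upwards [hsub1, key t ht, hcompl] with ω h1 h2 h3
      rw [h1, h2, h3]
      ring
    · -- `T ⁻¹' s = ∅`
      have hTs : T ⁻¹' s = (∅ : Set Ω) := by
        ext ω
        simp only [Set.mem_preimage, Set.mem_empty_iff_false, iff_false]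
        intro hm
        rcases h01 (T ω) with h | h
        · exact h0s (h ▸ hm)
        · exact h1s (h ▸ hm)
      have hzero : (μ⟦(∅ : Set Ω) | MeasurableSpace.comap φ inferInstance⟧) = 0 := by
        rw [Set.indicator_empty]
        exact condExp_zero
      rw [hTs, Set.empty_inter, hzero]
      filter_upwards with ω
      simp
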